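/- Let N = [[N11, N12],[N21, 0]] be a 2×2 block complex matrix and Δ_b a complex matrix of compatible size such that I − N11 Δ_b is invertible. Define the lower LFT F(N, Δ_b) = N21 Δ_b (I − N11 Δ_b)^{-1} N12. If σ̄(N) < 1 and σ̄(Δ_b) ≤ 1, then σ̄(F(N, Δ_b)) < 1. -/

import Mathlib

open Matrix
open scoped ComplexOrder

/-- The largest singular value of a complex matrix: the operator norm of the
induced linear map between Euclidean spaces. -/
noncomputable def sigmaMax {m n : Type*} [Fintype m] [Fintype n] [DecidableEq n]
    (A : Matrix m n ℂ) : ℝ :=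
  ‖LinearMap.toContinuousLinearMap (Matrix.toEuclideanLin A)‖

lemma sigmaMax_nonneg {m n : Type*} [Fintype m] [Fintype n] [DecidableEq n]
    (A : Matrix m n ℂ) : 0 ≤ sigmaMax A := norm_nonneg _

lemma mulVec_norm_le {m n : Type*} [Fintype m] [Fintype n] [DecidableEq n]
    (A : Matrix m n ℂ) (x : n → ℂ) :
    Real.sqrt (∑ i, ‖A.mulVec x i‖ ^ 2) ≤
      sigmaMax A * Real.sqrt (∑ j, ‖x j‖ ^ 2) := by
  have h := (LinearMap.toContinuousLinearMap (Matrix.toEuclideanLin A)).le_opNorm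
    ((WithLp.equiv 2 (n → ℂ)).symm x)
  have h1 : (LinearMap.toContinuousLinearMap (Matrix.toEuclideanLin A))
      ((WithLp.equiv 2 (n → ℂ)).symm x) = (WithLp.equiv 2 (m → ℂ)).symm (A.mulVec x) := by
    simp [Matrix.toEuclideanLin_apply]
  rw [h1] at h
  rw [EuclideanSpace.norm_eq, EuclideanSpace.norm_eq] at h
  simpa [sigmaMax] using h

lemma mulVec_nsq_le {m n : Type*} [Fintype m] [Fintype n] [DecidableEq n]
    (A : Matrix m n ℂ) (x : n → ℂ) :
    ∑ i, ‖A.mulVec x i‖ ^ 2 ≤ (sigmaMax A) ^ 2 * ∑ j, ‖x j‖ ^ 2 := by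
  have h := mulVec_norm_le A x
  have h1 : (0:ℝ) ≤ ∑ i, ‖A.mulVec x i‖ ^ 2 :=
    Finset.sum_nonneg fun i _ => sq_nonneg _
  have h2 : (0:ℝ) ≤ ∑ j, ‖x j‖ ^ 2 :=
    Finset.sum_nonneg fun i _ => sq_nonneg _
  have := mul_self_le_mul_self (Real.sqrt_nonneg _) h
  rw [Real.mul_self_sqrt h1] at this
  calc ∑ i, ‖A.mulVec x i‖ ^ 2 ≤ (sigmaMax A * Real.sqrt (∑ j, ‖x j‖ ^ 2)) *
        (sigmaMax A * Real.sqrt (∑ j, ‖x j‖ ^ 2)) := this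
    _ = (sigmaMax A) ^ 2 * ∑ j, ‖x j‖ ^ 2 := by
        rw [mul_mul_mul_comm, Real.mul_self_sqrt h2]; ring

theorem lft_sigmaMax_lt_one {mb pb mc pc : ℕ}
    (N11 : Matrix (Fin mb) (Fin pb) ℂ) (N12 : Matrix (Fin mb) (Fin mc) ℂ)
    (N21 : Matrix (Fin pc) (Fin pb) ℂ) (Δb : Matrix (Fin pb) (Fin mb) ℂ)
    (hinv : IsUnit (1 - N11 * Δb))
    (hN : sigmaMax (Matrix.fromBlocks N11 N12 N21 (0 : Matrix (Fin pc) (Fin mc) ℂ)) < 1)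
    (hΔ : sigmaMax Δb ≤ 1) :
    sigmaMax (N21 * Δb * (1 - N11 * Δb)⁻¹ * N12) < 1 := by
  set F := N21 * Δb * (1 - N11 * Δb)⁻¹ * N12 with hF
  set Nmat := Matrix.fromBlocks N11 N12 N21 (0 : Matrix (Fin pc) (Fin mc) ℂ) with hNmat
  set s := sigmaMax Nmat with hs
  have hs0 : 0 ≤ s := sigmaMax_nonneg _
  -- main bound : for all d, ‖F d‖ ≤ s ‖d‖  (in Euclidean norms)
  have key : ∀ d : Fin mc → ℂ,
      ∑ i, ‖F.mulVec d i‖ ^ 2 ≤ s ^ 2 * ∑ j, ‖d j‖ ^ 2 := by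
    intro d
    set u : Fin mb → ℂ := (1 - N11 * Δb)⁻¹.mulVec (N12.mulVec d) with hu
    set w : Fin pb → ℂ := Δb.mulVec u with hw
    have hFd : F.mulVec d = N21.mulVec w := by
      rw [hw, hu, hF]
      simp [Matrix.mulVec_mulVec, Matrix.mul_assoc]
    have hueq : u = N11.mulVec w + N12.mulVec d := by
      have h1 : (1 - N11 * Δb).mulVec u = N12.mulVec d := by
        rw [hu, Matrix.mulVec_mulVec, Matrix.mul_nonsing_inv _
          ((Matrix.isUnit_iff_isUnit_det _).mp hinv), Matrix.one_mulVec]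
      have h2 : (1 - N11 * Δb).mulVec u = u - N11.mulVec w := by
        rw [Matrix.sub_mulVec, Matrix.one_mulVec, hw]
        congr 1
        conv_rhs => rw [hu]
        simp [Matrix.mulVec_mulVec, Matrix.mul_assoc]
        rw [hu, Matrix.mulVec_mulVec, Matrix.mulVec_mulVec, Matrix.mul_assoc, Matrix.mul_assoc]
      rw [h2] at h1
      rw [← h1]; abel
    -- block inequality
    have hblock := mulVec_nsq_le Nmat (Sum.elim w d)
    have hbv : Nmat.mulVec (Sum.elim w d) = Sum.elim u (F.mulVec d) := by
      rw [hNmat, Matrix.fromBlocks_mulVec]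
      simp only [Sum.elim_comp_inl, Sum.elim_comp_inr, Matrix.zero_mulVec, add_zero]
      rw [← hueq, ← hFd]
    rw [hbv] at hblock
    rw [Fintype.sum_sum_type, Fintype.sum_sum_type] at hblock
    simp only [Sum.elim_inl, Sum.elim_inr] at hblock
    -- set scalars
    have hwle : ∑ i, ‖w i‖ ^ 2 ≤ ∑ i, ‖u i‖ ^ 2 := by
      have h := mulVec_nsq_le Δb u
      have hΔ2 : (sigmaMax Δb) ^ 2 ≤ 1 := by
        have := sigmaMax_nonneg Δb
        nlinarith
      calc ∑ i, ‖w i‖ ^ 2 ≤ (sigmaMax Δb) ^ 2 * ∑ i, ‖u i‖ ^ 2 := h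
        _ ≤ 1 * ∑ i, ‖u i‖ ^ 2 := by
            apply mul_le_mul_of_nonneg_right hΔ2
            exact Finset.sum_nonneg fun i _ => sq_nonneg _
        _ = ∑ i, ‖u i‖ ^ 2 := one_mul _
    have hs2 : s ^ 2 ≤ 1 := by nlinarith
    have hwnn : (0:ℝ) ≤ ∑ i, ‖w i‖ ^ 2 := Finset.sum_nonneg fun i _ => sq_nonneg _
    nlinarith [Finset.sum_nonneg (fun i _ => sq_nonneg ‖u i‖ : ∀ i ∈ Finset.univ, (0:ℝ) ≤ ‖u i‖ ^ 2)]
  -- conclude sigmaMax F ≤ s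
  have hle : sigmaMax F ≤ s := by
    apply ContinuousLinearMap.opNorm_le_bound _ hs0
    intro x
    have h := key ((WithLp.equiv 2 (Fin mc → ℂ)) x)
    have h1 : (LinearMap.toContinuousLinearMap (Matrix.toEuclideanLin F)) x
        = (WithLp.equiv 2 (Fin pc → ℂ)).symm (F.mulVec ((WithLp.equiv 2 (Fin mc → ℂ)) x)) := by
      simp [Matrix.toEuclideanLin_apply]
    rw [h1, EuclideanSpace.norm_eq]
    have hx : ‖x‖ = Real.sqrt (∑ j, ‖(WithLp.equiv 2 (Fin mc → ℂ)) x j‖ ^ 2) := by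
      rw [EuclideanSpace.norm_eq]; rfl
    rw [hx]
    have := Real.sqrt_le_sqrt h
    calc Real.sqrt (∑ i, ‖(WithLp.equiv 2 (Fin pc → ℂ)).symm
          (F.mulVec ((WithLp.equiv 2 (Fin mc → ℂ)) x)) i‖ ^ 2)
        = Real.sqrt (∑ i, ‖F.mulVec ((WithLp.equiv 2 (Fin mc → ℂ)) x) i‖ ^ 2) := rfl
      _ ≤ Real.sqrt (s ^ 2 * ∑ j, ‖(WithLp.equiv 2 (Fin mc → ℂ)) x j‖ ^ 2) := this
      _ = s * Real.sqrt (∑ j, ‖(WithLp.equiv 2 (Fin mc → ℂ)) x j‖ ^ 2) := by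
          rw [Real.sqrt_mul (sq_nonneg s), Real.sqrt_sq hs0]
  exact lt_of_le_of_lt hle hN
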